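/- (Classical Krasovskii method.) Let f : E → E be a C¹ vector field on E = EuclideanSpace ℝ (Fin n), and let P, Q : E →L[ℝ] E be symmetric continuous linear maps with P positive semidefinite, such that for all x ∈ E and v ∈ E: ⟪v, P (D f(x) v)⟫ + ⟪D f(x) v, P v⟫ ≤ −⟪v, Q v⟫, where D f(x) is the Fréchet derivative of f at x and ⟪·,·⟫ is the Euclidean inner product. Then along any solution x(·) of ẋ = f(x), the function V(t) = ⟪f(x(t)), P f(x(t))⟫ is differentiable with V'(t) ≤ −⟪f(x(t)), Q f(x(t))⟫ for all t in the interval of definition. -/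

import Mathlib

open scoped RealInnerProductSpace

noncomputable section

/-- The Euclidean state space. -/
abbrev E (n : ℕ) := EuclideanSpace ℝ (Fin n)

/-- Classical Krasovskii method: if `P` is symmetric positive semidefinite, `Q` is
symmetric, and `⟪v, P (Df(x) v)⟫ + ⟪Df(x) v, P v⟫ ≤ −⟪v, Q v⟫` for all `x, v`, then
along any solution of `ẋ = f(x)` the function `V(t) = ⟪f(x(t)), P f(x(t))⟫` is
differentiable with `V'(t) ≤ −⟪f(x(t)), Q f(x(t))⟫`. -/
theorem classical_krasovskii {n : ℕ} (f : E n → E n) (hf : ContDiff ℝ 1 f)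
    (P Q : E n →L[ℝ] E n)
    (hPsymm : ∀ u v : E n, ⟪P u, v⟫ = ⟪u, P v⟫)
    (hPpos : ∀ u : E n, 0 ≤ ⟪P u, u⟫)
    (hQsymm : ∀ u v : E n, ⟪Q u, v⟫ = ⟪u, Q v⟫)
    (hKraso : ∀ x v : E n,
      ⟪v, P (fderiv ℝ f x v)⟫ + ⟪fderiv ℝ f x v, P v⟫ ≤ -⟪v, Q v⟫)
    (s : Set ℝ) (x : ℝ → E n) (hx : ∀ t ∈ s, HasDerivAt x (f (x t)) t) :
    ∀ t ∈ s, ∃ d : ℝ,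
      HasDerivAt (fun τ => ⟪f (x τ), P (f (x τ))⟫) d t ∧
      d ≤ -⟪f (x t), Q (f (x t))⟫ := by
  intro t ht
  set v := f (x t) with hv
  set D := fderiv ℝ f (x t) v with hD
  have hg : HasDerivAt (fun τ => f (x τ)) D t :=
    ((hf.differentiable one_ne_zero (x t)).hasFDerivAt).comp_hasDerivAt t (hx t ht)
  have hPg : HasDerivAt (fun τ => P (f (x τ))) (P D) t :=
    (P.hasFDerivAt).comp_hasDerivAt t hg
  have hV : HasDerivAt (fun τ => ⟪f (x τ), P (f (x τ))⟫)
      (⟪v, P D⟫ + ⟪D, P v⟫) t := by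
    have := hg.inner ℝ hPg
    simpa [real_inner_comm] using this
  exact ⟨_, hV, hKraso (x t) v⟩
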